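/- Let Γ be an injective compressed labeled oriented tree (LOT) and Γ₁ a maximal proper sub-LOT. If the quotient LOT Γ̄₁ obtained by collapsing Γ₁ is not compressed, then Γ = Γ₁ ∪ e for a single edge e attached to Γ₁, the vertex y of e not in Γ₁ does not occur as an edge label in Γ₁, and in particular Γ is not boundary reduced. -/

import Mathlib

/-- A labeled oriented graph (LOG): an oriented graph whose edges are labeled by vertices.
A labeled oriented tree (LOT) is a LOG satisfying `IsTree`. -/
structure LOG where
  V : Type
  E : Type
  src : E → V
  tgt : E → V
  lab : E → V

namespace LOG

variable (G : LOG)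

/-- Adjacency in the underlying undirected graph. -/
def Adj (v w : G.V) : Prop :=
  ∃ e, (G.src e = v ∧ G.tgt e = w) ∨ (G.src e = w ∧ G.tgt e = v)

/-- Adjacency using only edges from `S`. -/
def AdjOn (S : Set G.E) (v w : G.V) : Prop :=
  ∃ e ∈ S, (G.src e = v ∧ G.tgt e = w) ∨ (G.src e = w ∧ G.tgt e = v)

/-- The vertices incident to an edge set. -/
def verts (S : Set G.E) : Set G.V := {v | ∃ e ∈ S, G.src e = v ∨ G.tgt e = v}

/-- Connectivity of the subgraph spanned by the edge set `S`. -/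
def ConnOn (S : Set G.E) : Prop :=
  ∀ v ∈ G.verts S, ∀ w ∈ G.verts S, Relation.ReflTransGen (G.AdjOn S) v w

/-- The underlying graph is a finite tree: connected, without loops or multiple edges,
and with one more vertex than edges. -/
def IsTree : Prop :=
  Finite G.V ∧ Finite G.E ∧ Nonempty G.V ∧
  (∀ v w : G.V, Relation.ReflTransGen G.Adj v w) ∧
  (∀ e, G.src e ≠ G.tgt e) ∧
  (∀ e e', ({G.src e, G.tgt e} : Set G.V) = {G.src e', G.tgt e'} → e = e') ∧
  Nat.card G.V = Nat.card G.E + 1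

/-- No edge is labeled with one of its own endpoints. -/
def Compressed : Prop := ∀ e, G.lab e ≠ G.src e ∧ G.lab e ≠ G.tgt e

/-- Each vertex occurs as an edge label at most once. -/
def Inj : Prop := ∀ e e', G.lab e = G.lab e' → e = e'

/-- A leaf (boundary vertex): a vertex incident with exactly one edge. -/
def IsLeaf (v : G.V) : Prop := {e | G.src e = v ∨ G.tgt e = v}.ncard = 1

/-- Every boundary vertex occurs as an edge label. -/
def BoundaryReduced : Prop := ∀ v, G.IsLeaf v → ∃ e, G.lab e = v

/-- Reduced: compressed and boundary reduced. -/
def Reduced : Prop := G.Compressed ∧ G.BoundaryReduced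

/-- A sub-LOT, given by a nonempty connected set of edges all of whose labels are
vertices of the subgraph. -/
def IsSubLOT (S : Set G.E) : Prop :=
  S.Nonempty ∧ G.ConnOn S ∧ ∀ e ∈ S, G.lab e ∈ G.verts S

/-- A proper sub-LOT. -/
def ProperSubLOT (S : Set G.E) : Prop := G.IsSubLOT S ∧ S ≠ Set.univ

/-- A maximal proper sub-LOT. -/
def MaxProperSubLOT (S : Set G.E) : Prop :=
  G.ProperSubLOT S ∧ ∀ T, G.ProperSubLOT T → S ⊆ T → S = T

/-- A prime LOG: one with no proper sub-LOT. -/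
def Prime : Prop := ∀ S, ¬ G.ProperSubLOT S

/-- A LOG freely decomposes if it is the union of two proper sub-LOTs meeting in a
single vertex. -/
def FreelyDecomposes : Prop :=
  ∃ (SL SR : Set G.E) (x : G.V), G.ProperSubLOT SL ∧ G.ProperSubLOT SR ∧
    SL ∪ SR = Set.univ ∧ G.verts SL ∩ G.verts SR = {x}

/-- The map collapsing the vertices of the subgraph spanned by `S` to the vertex `x`. -/
noncomputable def collapseMap (S : Set G.E) (x : G.V) : G.V → G.V :=
  fun v => letI := Classical.dec (v ∈ G.verts S); if v ∈ G.verts S then x else v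

/-- The quotient LOG obtained by collapsing the sub-LOT `S` to the vertex `x`
(the vertex of `S` not occurring as an edge label of `S`).  The edges are the edges
outside `S`; endpoints and labels are pushed forward along the collapse map. -/
noncomputable def collapse (S : Set G.E) (x : G.V) : LOG where
  V := G.V
  E := {e : G.E // e ∉ S}
  src e := G.collapseMap S x (G.src e.1)
  tgt e := G.collapseMap S x (G.tgt e.1)
  lab e := G.collapseMap S x (G.lab e.1)

end LOG


namespace LOG

variable (G : LOG)

/-- Vertices reachable from `x` by a chain of length at most `n` in `S`. -/
def reach (S : Set G.E) (x : G.V) : ℕ → G.V → Prop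
  | 0, v => v = x
  | n+1, v => reach S x n v ∨ ∃ u, reach S x n u ∧ G.AdjOn S u v

lemma reach_of_rtg {S : Set G.E} {x v : G.V}
    (h : Relation.ReflTransGen (G.AdjOn S) x v) : ∃ n, G.reach S x n v := by
  induction h with
  | refl => exact ⟨0, rfl⟩
  | tail h1 h2 ih => obtain ⟨n, hn⟩ := ih; exact ⟨n + 1, Or.inr ⟨_, hn, h2⟩⟩

lemma adjOn_symm {S : Set G.E} : Symmetric (G.AdjOn S) := by
  rintro u v ⟨e, he, h | h⟩
  · exact ⟨e, he, Or.inr h⟩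
  · exact ⟨e, he, Or.inl h⟩

/-- A connected edge set spans at most one more vertex than it has edges. -/
lemma verts_ncard_le (S : Set G.E) (hconn : G.ConnOn S)
    (hE : Finite G.E) (hV : Finite G.V) :
    (G.verts S).ncard ≤ S.ncard + 1 := by
  classical
  rcases (G.verts S).eq_empty_or_nonempty with h0 | ⟨x₀, hx₀⟩
  · simp [h0]
  -- distance function
  have hex : ∀ v ∈ G.verts S, ∃ n, G.reach S x₀ n v := fun v hv =>
    G.reach_of_rtg (hconn x₀ hx₀ v hv)
  let d : G.V → ℕ := fun v =>
    if h : ∃ n, G.reach S x₀ n v then Nat.find h else 0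
  -- every vertex other than x₀ has an incident edge whose other end is closer
  have key : ∀ v ∈ G.verts S, v ≠ x₀ → ∃ e, e ∈ S ∧
      ((G.src e = v ∧ d (G.tgt e) < d v) ∨ (G.tgt e = v ∧ d (G.src e) < d v)) := by
    intro v hv hvx
    obtain ⟨n, hn⟩ := hex v hv
    have hh : ∃ n, G.reach S x₀ n v := ⟨n, hn⟩
    have hdv : d v = Nat.find hh := by simp [d, hh]
    have hspec : G.reach S x₀ (Nat.find hh) v := Nat.find_spec hh
    have hdvpos : Nat.find hh ≠ 0 := by
      intro h0
      rw [h0] at hspec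
      exact hvx hspec
    obtain ⟨m, hm⟩ := Nat.exists_eq_succ_of_ne_zero hdvpos
    rw [hm] at hspec
    rcases hspec with hr | ⟨u, hu, e, heS, hor⟩
    · exact absurd hr (Nat.find_min hh (by omega))
    · have hdu : d u ≤ m := by
        have hhu : ∃ n, G.reach S x₀ n u := ⟨m, hu⟩
        simp only [d, dif_pos hhu]
        exact Nat.find_min' hhu hu
      have hdv' : d v = m + 1 := by rw [hdv, hm]
      refine ⟨e, heS, ?_⟩
      rcases hor with ⟨h1, h2⟩ | ⟨h1, h2⟩
      · exact Or.inr ⟨h2, by rw [h1, hdv']; omega⟩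
      · exact Or.inl ⟨h1, by rw [h2, hdv']; omega⟩
  have hSne : S.Nonempty := by
    obtain ⟨e, he, -⟩ := hx₀
    exact ⟨e, he⟩
  haveI : Nonempty G.E := ⟨hSne.choose⟩
  let f : G.V → G.E := fun v =>
    if h : ∃ e, e ∈ S ∧
        ((G.src e = v ∧ d (G.tgt e) < d v) ∨ (G.tgt e = v ∧ d (G.src e) < d v))
    then h.choose else Classical.arbitrary G.E
  have hfspec : ∀ v ∈ G.verts S \ {x₀}, f v ∈ S ∧
      ((G.src (f v) = v ∧ d (G.tgt (f v)) < d v) ∨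
        (G.tgt (f v) = v ∧ d (G.src (f v)) < d v)) := by
    rintro v ⟨hv, hvx⟩
    have h := key v hv hvx
    simp only [f, dif_pos h]
    exact h.choose_spec
  have hmaps : ∀ v ∈ G.verts S \ {x₀}, f v ∈ S := fun v hv => (hfspec v hv).1
  have hinj : Set.InjOn f (G.verts S \ {x₀}) := by
    intro v hv w hw hfe
    obtain ⟨-, hv2⟩ := hfspec v hv
    obtain ⟨-, hw2⟩ := hfspec w hw
    rw [hfe] at hv2
    by_contra hne
    rcases hv2 with ⟨a1, a2⟩ | ⟨a1, a2⟩ <;> rcases hw2 with ⟨b1, b2⟩ | ⟨b1, b2⟩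
    · exact hne (a1.symm.trans b1)
    · rw [b1] at a2; rw [a1] at b2; omega
    · rw [b1] at a2; rw [a1] at b2; omega
    · exact hne (a1.symm.trans b1)
  have h1 : (G.verts S \ {x₀}).ncard ≤ S.ncard :=
    Set.ncard_le_ncard_of_injOn f hmaps hinj S.toFinite
  have h2 : (G.verts S \ {x₀}).ncard + 1 = (G.verts S).ncard :=
    Set.ncard_diff_singleton_add_one hx₀ (G.verts S).toFinite
  omega

end LOG

/-- Let `Γ` be an injective compressed LOT and `Γ₁` (edge set `S`) a
maximal proper sub-LOT, with `x` the unique vertex of `Γ₁` not occurring as an edge label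
of `Γ₁`.  If the quotient LOT `Γ̄₁` obtained by collapsing `Γ₁` to `x` is not compressed,
then `Γ = Γ₁ ∪ e` for a single edge `e` attached to `Γ₁`, whose vertex `y` not in `Γ₁` does
not occur as an edge label in `Γ₁`; in particular `Γ` is not boundary reduced. -/
theorem collapse_not_compressed_structure
    (G : LOG) (hT : G.IsTree) (hC : G.Compressed) (hI : G.Inj)
    (S : Set G.E) (hS : G.MaxProperSubLOT S)
    (x : G.V) (hx : x ∈ G.verts S) (hxlab : ∀ e ∈ S, G.lab e ≠ x)
    (hnc : ¬ (G.collapse S x).Compressed) :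
    ∃ e₀ : G.E, e₀ ∉ S ∧ Sᶜ = {e₀} ∧
      ∃ y : G.V, (G.src e₀ = y ∨ G.tgt e₀ = y) ∧ y ∉ G.verts S ∧
        (∀ e ∈ S, G.lab e ≠ y) ∧ ¬ G.BoundaryReduced := by
  classical
  obtain ⟨⟨⟨hSne, hSconn, hSlab⟩, hSneq⟩, hSmax⟩ := hS
  obtain ⟨hVfin, hEfin, hVne, hconnG, hloop, hsimple, hcard⟩ := hT
  -- extract the offending edge from non-compressedness of the collapse
  simp only [LOG.Compressed, LOG.collapse, not_forall, not_and_or, not_not] at hnc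
  obtain ⟨⟨e₀, he₀⟩, hbad⟩ := hnc
  -- collapseMap identifies two distinct vertices only if both lie in `verts S`
  have hcm : ∀ a b : G.V, a ≠ b → G.collapseMap S x a = G.collapseMap S x b →
      a ∈ G.verts S ∧ b ∈ G.verts S := by
    intro a b hab h
    unfold LOG.collapseMap at h
    by_cases ha : a ∈ G.verts S <;> by_cases hb : b ∈ G.verts S <;>
      simp [ha, hb] at h
    · exact ⟨ha, hb⟩
    · exact absurd (h ▸ hx) hb
    · exact absurd (h ▸ hx) ha
    · exact absurd h hab
  have hlabS : G.lab e₀ ∈ G.verts S ∧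
      (G.src e₀ ∈ G.verts S ∨ G.tgt e₀ ∈ G.verts S) := by
    rcases hbad with h | h
    · obtain ⟨h1, h2⟩ := hcm _ _ (hC e₀).1 h
      exact ⟨h1, Or.inl h2⟩
    · obtain ⟨h1, h2⟩ := hcm _ _ (hC e₀).2 h
      exact ⟨h1, Or.inr h2⟩
  obtain ⟨hlab₀, hend₀⟩ := hlabS
  -- a distinguished endpoint of e₀ lying in verts S
  obtain ⟨z, hz, hze⟩ : ∃ z, z ∈ G.verts S ∧ (G.src e₀ = z ∨ G.tgt e₀ = z) := by
    rcases hend₀ with h | h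
    exacts [⟨_, h, Or.inl rfl⟩, ⟨_, h, Or.inr rfl⟩]
  -- T = S ∪ {e₀} is a sub-LOT
  set T : Set G.E := insert e₀ S with hT
  have hsub : S ⊆ T := Set.subset_insert _ _
  have hvsub : G.verts S ⊆ G.verts T := by
    rintro v ⟨e, he, hv⟩
    exact ⟨e, hsub he, hv⟩
  have hTlab : ∀ e ∈ T, G.lab e ∈ G.verts T := by
    intro e he
    rcases he with rfl | he
    · exact hvsub hlab₀
    · exact hvsub (hSlab e he)
  have hall : ∀ v ∈ G.verts T, Relation.ReflTransGen (G.AdjOn T) v z := by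
    rintro v ⟨e, he, hv⟩
    rcases he with rfl | he
    · -- v is an endpoint of e₀
      by_cases hvz : v = z
      · exact hvz ▸ Relation.ReflTransGen.refl
      · refine Relation.ReflTransGen.single ⟨e, Set.mem_insert _ _, ?_⟩
        rcases hv with h1 | h1 <;> rcases hze with h2 | h2
        · exact absurd (h1.symm.trans h2) hvz
        · exact Or.inl ⟨h1, h2⟩
        · exact Or.inr ⟨h2, h1⟩
        · exact absurd (h1.symm.trans h2) hvz
    · have hvS : v ∈ G.verts S := ⟨e, he, hv⟩
      exact Relation.ReflTransGen.mono (p := G.AdjOn T) (fun a b ⟨e', he', h'⟩ => ⟨e', hsub he', h'⟩) _ _ (hSconn v hvS z hz)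
  have hTconn : G.ConnOn T := by
    intro v hv w hw
    exact (hall v hv).trans (Relation.ReflTransGen.mono (p := G.AdjOn T) (fun a b (h : G.AdjOn T b a) => G.adjOn_symm h)
      _ _ (hall w hw).swap)
  have hTsub : G.IsSubLOT T := ⟨⟨e₀, Set.mem_insert _ _⟩, hTconn, hTlab⟩
  -- by maximality T must be everything
  have hTuniv : T = Set.univ := by
    by_contra hne
    have := hSmax T ⟨hTsub, hne⟩ hsub
    exact he₀ (this ▸ Set.mem_insert _ _)
  have hScomp : Sᶜ = {e₀} := by
    ext e
    constructor
    · intro he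
      have : e ∈ T := hTuniv ▸ Set.mem_univ e
      rcases this with rfl | h
      · rfl
      · exact absurd h he
    · rintro rfl
      exact he₀
  -- not both endpoints of e₀ lie in verts S
  haveI : Nonempty G.E := ⟨hSne.choose⟩
  have hE1 : 1 ≤ Nat.card G.E := Nat.card_pos
  have hnotboth : ¬ (G.src e₀ ∈ G.verts S ∧ G.tgt e₀ ∈ G.verts S) := by
    rintro ⟨hs, ht⟩
    have hvuniv : G.verts S = Set.univ := by
      ext v
      simp only [Set.mem_univ, iff_true]
      have hnt : Nontrivial G.V :=
        Finite.one_lt_card_iff_nontrivial.mp (by omega)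
      obtain ⟨w, hw⟩ := exists_ne v
      rcases (hconnG v w).cases_head with rfl | ⟨u, ⟨e, hadj⟩, -⟩
      · exact absurd rfl hw.symm
      · by_cases heS : e ∈ S
        · rcases hadj with ⟨h1, -⟩ | ⟨-, h1⟩
          · exact ⟨e, heS, Or.inl h1⟩
          · exact ⟨e, heS, Or.inr h1⟩
        · have : e = e₀ := by
            have : e ∈ Sᶜ := heS
            rwa [hScomp] at this
          subst this
          rcases hadj with ⟨h1, -⟩ | ⟨-, h1⟩
          · exact h1 ▸ hs
          · exact h1 ▸ ht
    have h1 : (G.verts S).ncard = Nat.card G.V := by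
      rw [hvuniv, Set.ncard_univ]
    have h2 : S.ncard + 1 = Nat.card G.E := by
      have := Set.ncard_add_ncard_compl S
      rwa [hScomp, Set.ncard_singleton] at this
    have h3 := G.verts_ncard_le S hSconn hEfin hVfin
    omega
  rw [not_and_or] at hnotboth
  obtain ⟨y, hey, hyn⟩ : ∃ y, (G.src e₀ = y ∨ G.tgt e₀ = y) ∧ y ∉ G.verts S := by
    rcases hnotboth with h | h
    exacts [⟨_, Or.inl rfl, h⟩, ⟨_, Or.inr rfl, h⟩]
  have hlabne : ∀ e ∈ S, G.lab e ≠ y := by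
    intro e he h
    exact hyn (h ▸ hSlab e he)
  refine ⟨e₀, he₀, hScomp, y, hey, hyn, hlabne, ?_⟩
  -- y is a leaf
  have hleaf : G.IsLeaf y := by
    have : {e | G.src e = y ∨ G.tgt e = y} = {e₀} := by
      ext e
      constructor
      · intro he
        by_cases heS : e ∈ S
        · exact absurd ⟨e, heS, he⟩ hyn
        · have : e ∈ Sᶜ := heS
          rwa [hScomp] at this
      · rintro rfl
        exact hey
    rw [LOG.IsLeaf, this, Set.ncard_singleton]
  intro hBR
  obtain ⟨e, hle⟩ := hBR y hleaf
  by_cases heS : e ∈ S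
  · exact hlabne e heS hle
  · have : e = e₀ := by
      have : e ∈ Sᶜ := heS
      rwa [hScomp] at this
    subst this
    exact hyn (hle ▸ hlab₀)
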